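/- Let m, n be natural numbers and let P and Q be two distinct staircases from (0,0) to (m,n), encoded by the m-element subsets F_P and F_Q of {0,…,m+n−1} given by the positions of their (1,0)-steps. Then the sets of lattice points visited by P and by Q share exactly m+n points (i.e. |{p_0,…,p_{m+n}} ∩ {q_0,…,q_{m+n}}| = m+n) if and only if Σ_{k=1}^{m} |s(F_P)_k − s(F_Q)_k| = 1, i.e. the vectors s(F_P) and s(F_Q) differ in exactly one coordinate and there by exactly 1. -/

import Mathlib

/-- A staircase from `(0,0)` to `(m,n)`. -/
def IsStaircase (m n : ℕ) (p : Fin (m + n + 1) → ℕ × ℕ) : Prop :=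
  p 0 = (0, 0) ∧ p (Fin.last (m + n)) = (m, n) ∧
    ∀ t : Fin (m + n), p t.succ = p t.castSucc + (1, 0) ∨ p t.succ = p t.castSucc + (0, 1)

/-- The set of indices `t` at which the staircase `p` makes a `(1,0)`-step
(the encoding of a staircase as an `m`-element subset of `{0,…,m+n-1}`). -/
def rightSteps (m n : ℕ) (p : Fin (m + n + 1) → ℕ × ℕ) : Finset (Fin (m + n)) :=
  Finset.univ.filter fun t => (p t.succ).1 = (p t.castSucc).1 + 1

/-- The vector `s(F)` associated with a staircase: its (0-indexed) `k`-th entry is the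
`k`-th smallest element `f_k` of the set `F` of `(1,0)`-step positions, minus `k`. -/
def sVec (m n : ℕ) (p : Fin (m + n + 1) → ℕ × ℕ) : Fin m → ℕ :=
  fun k => (((rightSteps m n p).sort (· ≤ ·)).map Fin.val).getD (k : ℕ) 0 - (k : ℕ)

namespace StairAux

/-- count of right steps before position `s` -/
def A (m n : ℕ) (p : Fin (m + n + 1) → ℕ × ℕ) (s : ℕ) : ℕ :=
  ((rightSteps m n p).filter (fun i : Fin (m + n) => (i : ℕ) < s)).card

variable {m n : ℕ} {p q : Fin (m + n + 1) → ℕ × ℕ}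

lemma sum_coord (hp : IsStaircase m n p) (t : Fin (m + n + 1)) :
    (p t).1 + (p t).2 = t.val := by
  induction t using Fin.induction with
  | zero => simp [hp.1]
  | succ t ih =>
    rcases hp.2.2 t with h | h <;>
      simp only [h, Prod.fst_add, Prod.snd_add, Fin.val_succ] <;>
      · simp at ih ⊢; omega

lemma A_zero : A m n p 0 = 0 := by simp [A]

lemma A_succ_mem (t : Fin (m + n)) :
    A m n p (t.val + 1) = A m n p t.val + if t ∈ rightSteps m n p then 1 else 0 := by
  unfold A
  have hsplit : ((rightSteps m n p).filter (fun i : Fin (m + n) => (i : ℕ) < t.val + 1))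
      = ((rightSteps m n p).filter (fun i : Fin (m + n) => (i : ℕ) < t.val))
        ∪ ((rightSteps m n p).filter (fun i : Fin (m + n) => i = t)) := by
    ext i
    simp only [Finset.mem_filter, Finset.mem_union]
    constructor
    · rintro ⟨hmem, hlt⟩
      rcases Nat.lt_or_ge (i : ℕ) t.val with h' | h'
      · exact Or.inl ⟨hmem, h'⟩
      · exact Or.inr ⟨hmem, Fin.ext (by omega)⟩
    · rintro (⟨hmem, h⟩ | ⟨hmem, rfl⟩)
      · exact ⟨hmem, by omega⟩
      · exact ⟨hmem, by omega⟩
  rw [hsplit, Finset.card_union_of_disjoint, Finset.filter_eq']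
  · split_ifs <;> simp
  · rw [Finset.disjoint_left]
    rintro i hi1 hi2
    simp only [Finset.mem_filter] at hi1 hi2
    rcases hi2 with ⟨-, rfl⟩
    omega

lemma first_coord (hp : IsStaircase m n p) (t : Fin (m + n + 1)) :
    (p t).1 = A m n p t.val := by
  induction t using Fin.induction with
  | zero => simp [hp.1, A_zero]
  | succ t ih =>
    rw [Fin.val_succ, A_succ_mem]
    rcases hp.2.2 t with h | h
    · have ht : t ∈ rightSteps m n p := by
        simp [rightSteps, h]
      simp [h, ht, ← ih, Fin.coe_castSucc]
      rw [ih]; simp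
    · have ht : t ∉ rightSteps m n p := by
        simp [rightSteps, h]
      simp [h, ht, ← ih, Fin.coe_castSucc]
      rw [ih]; simp

lemma card_rightSteps (hp : IsStaircase m n p) : (rightSteps m n p).card = m := by
  have h := first_coord hp (Fin.last (m + n))
  rw [hp.2.1] at h
  simp only [Fin.val_last] at h
  have : ((rightSteps m n p).filter (fun i : Fin (m + n) => (i : ℕ) < m + n)) = rightSteps m n p := by
    apply Finset.filter_true_of_mem
    intro i _
    exact i.isLt
  rw [A, this] at h
  omega

lemma point_eq_iff (hp : IsStaircase m n p) (hq : IsStaircase m n q) (t : Fin (m + n + 1)) :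
    p t = q t ↔ A m n p t.val = A m n q t.val := by
  constructor
  · intro h
    rw [← first_coord hp t, ← first_coord hq t, h]
  · intro h
    have h1 : (p t).1 = (q t).1 := by rw [first_coord hp t, first_coord hq t, h]
    have h2 := sum_coord hp t
    have h3 := sum_coord hq t
    exact Prod.ext h1 (by omega)

lemma stair_inj (hp : IsStaircase m n p) : Function.Injective p := by
  intro s t h
  have hs := sum_coord hp s
  have ht := sum_coord hp t
  rw [h] at hs
  exact Fin.ext (by omega)

lemma inter_card (hp : IsStaircase m n p) (hq : IsStaircase m n q) :
    ((Finset.univ.image p) ∩ (Finset.univ.image q)).card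
      = (Finset.univ.filter (fun t => p t = q t)).card := by
  have himg : (Finset.univ.image p) ∩ (Finset.univ.image q)
      = Finset.image p (Finset.univ.filter (fun t => p t = q t)) := by
    ext x
    simp only [Finset.mem_inter, Finset.mem_image, Finset.mem_filter, Finset.mem_univ, true_and]
    constructor
    · rintro ⟨⟨s, rfl⟩, ⟨t, ht⟩⟩
      have hsum1 := sum_coord hp s
      have hsum2 := sum_coord hq t
      rw [ht] at hsum2
      have : t = s := Fin.ext (by omega)
      subst this
      exact ⟨t, ht.symm, rfl⟩
    · rintro ⟨t, ht, rfl⟩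
      exact ⟨⟨t, rfl⟩, ⟨t, ht.symm⟩⟩
  rw [himg, Finset.card_image_of_injective _ (stair_inj hp)]

/-- rank lemma: for a strictly sorted list of naturals, the `k`-th entry is `< t`
iff `k` is less than the number of entries `< t`. -/
lemma sorted_get_lt (l : List ℕ) (hl : l.Pairwise (· < ·)) (k : ℕ) (hk : k < l.length) (t : ℕ) :
    l.get ⟨k, hk⟩ < t ↔ k < (l.filter (fun x => x < t)).length := by
  induction l generalizing k with
  | nil => simp at hk
  | cons x xs ih =>
    rw [List.pairwise_cons] at hl
    by_cases hx : x < t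
    · rw [List.filter_cons_of_pos (by simpa using hx)]
      cases k with
      | zero => simpa using hx
      | succ j =>
        have hj : j < xs.length := by simpa using hk
        have := ih hl.2 j hj
        simp only [List.length_cons, List.get_cons_succ]
        rw [this]
        omega
    · rw [List.filter_cons_of_neg (by simpa using hx)]
      have hfil : xs.filter (fun x => x < t) = [] := by
        rw [List.filter_eq_nil_iff]
        intro a ha
        have := hl.1 a ha
        simp only [decide_eq_true_eq]
        omega
      rw [hfil]
      simp only [List.length_nil, Nat.not_lt_zero, iff_false, not_lt]
      cases k with
      | zero => simpa using hx
      | succ j =>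
        have hj : j < xs.length := by simpa using hk
        have hmem : xs.get ⟨j, hj⟩ ∈ xs := List.get_mem _ _
        have := hl.1 _ hmem
        simp only [List.get_cons_succ]
        omega

lemma le_get_of_strictMono {L : ℕ} (f : Fin L → ℕ) (hf : StrictMono f) :
    ∀ k (hk : k < L), k ≤ f ⟨k, hk⟩ := by
  intro k
  induction k with
  | zero => omega
  | succ j ih =>
    intro hk
    have hj : j < L := by omega
    have h1 := ih hj
    have h2 : f ⟨j, hj⟩ < f ⟨j + 1, hk⟩ := hf (by simp [Fin.lt_def])
    omega

/-- `A` equals the count in the sorted value list. -/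
lemma A_eq_filter_sort (s : ℕ) :
    A m n p s = ((((rightSteps m n p).sort (· ≤ ·)).map Fin.val).filter (fun x => x < s)).length := by
  rw [← List.countP_eq_length_filter, List.countP_map]
  unfold A
  rw [Finset.card, Finset.filter_val, ← Multiset.countP_eq_card_filter,
    ← Finset.sort_eq (rightSteps m n p) (· ≤ ·), Multiset.coe_countP]
  rfl

/-- sorted value list of right steps -/
def L (m n : ℕ) (p : Fin (m + n + 1) → ℕ × ℕ) : List ℕ :=
  ((rightSteps m n p).sort (· ≤ ·)).map Fin.val

lemma L_sorted : (L m n p).Pairwise (· < ·) := by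
  apply List.Pairwise.map
  · intro a b h
    exact Fin.lt_iff_val_lt_val.mp h
  · exact List.sortedLT_iff_pairwise.mp (Finset.sortedLT_sort _)

lemma L_length (hp : IsStaircase m n p) : (L m n p).length = m := by
  rw [L, List.length_map, Finset.length_sort, card_rightSteps hp]

lemma L_lt_N (hp : IsStaircase m n p) (k : ℕ) (hk : k < (L m n p).length) :
    (L m n p).get ⟨k, hk⟩ < m + n := by
  have hmem : (L m n p).get ⟨k, hk⟩ ∈ L m n p := List.get_mem _ _
  unfold L at hmem ⊢
  obtain ⟨i, -, hi⟩ := List.mem_map.mp hmem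
  rw [← hi]
  exact i.isLt

lemma le_L_get (k : ℕ) (hk : k < (L m n p).length) : k ≤ (L m n p).get ⟨k, hk⟩ :=
  le_get_of_strictMono _ (List.sortedLT_iff_pairwise.mpr L_sorted).strictMono_get k hk

/-- key rank fact -/
lemma L_get_le_iff (k : ℕ) (hk : k < (L m n p).length) (t : ℕ) :
    ((L m n p).get ⟨k, hk⟩ ≤ t ↔ k < A m n p (t + 1)) := by
  rw [A_eq_filter_sort, ← L, ← sorted_get_lt _ L_sorted k hk]
  omega

lemma A_le_card : A m n p s ≤ (rightSteps m n p).card :=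
  Finset.card_filter_le _ _

lemma A_mono (s : ℕ) : A m n p s ≤ A m n p (s + 1) := by
  apply Finset.card_le_card
  intro i hi
  simp only [Finset.mem_filter] at *
  exact ⟨hi.1, by omega⟩

lemma A_succ_le (s : ℕ) : A m n p (s + 1) ≤ A m n p s + 1 := by
  unfold A
  have hsub : ((rightSteps m n p).filter (fun i : Fin (m + n) => (i : ℕ) < s + 1))
      ⊆ ((rightSteps m n p).filter (fun i : Fin (m + n) => (i : ℕ) < s))
        ∪ ((rightSteps m n p).filter (fun i : Fin (m + n) => (i : ℕ) = s)) := by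
    intro i hi
    simp only [Finset.mem_filter, Finset.mem_union] at *
    rcases Nat.lt_or_ge (i : ℕ) s with h | h
    · exact Or.inl ⟨hi.1, h⟩
    · exact Or.inr ⟨hi.1, by omega⟩
  calc _ ≤ _ := Finset.card_le_card hsub
    _ ≤ _ + _ := Finset.card_union_le _ _
    _ ≤ _ + 1 := by
        gcongr
        apply Finset.card_le_one.mpr
        intro a ha b hb
        simp only [Finset.mem_filter] at ha hb
        exact Fin.ext (by omega)

lemma indicator_sum (N x y : ℕ) (hx : x ≤ N) (hy : y ≤ N) :
    ∑ t ∈ Finset.range N, ((if x ≤ t then (1 : ℤ) else 0) - (if y ≤ t then (1 : ℤ) else 0)).natAbs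
      = ((x : ℤ) - (y : ℤ)).natAbs := by
  have hterm : ∀ t, ((if x ≤ t then (1 : ℤ) else 0) - (if y ≤ t then (1 : ℤ) else 0)).natAbs
      = if min x y ≤ t ∧ t < max x y then 1 else 0 := by
    intro t
    rcases le_total x y with h | h <;> split_ifs <;> simp_all <;> omega
  rw [Finset.sum_congr rfl (fun t _ => hterm t), ← Finset.card_filter]
  have hIco : Finset.filter (fun t => min x y ≤ t ∧ t < max x y) (Finset.range N)
      = Finset.Ico (min x y) (max x y) := by
    ext t
    simp only [Finset.mem_filter, Finset.mem_range, Finset.mem_Ico]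
    omega
  rw [hIco, Nat.card_Ico]
  omega

lemma sum_abs_eq (hp : IsStaircase m n p) (hq : IsStaircase m n q) :
    ∑ k ∈ Finset.range m, (((L m n p).getD k 0 : ℤ) - ((L m n q).getD k 0 : ℤ)).natAbs
      = ∑ s ∈ Finset.range (m + n), ((A m n p (s + 1) : ℤ) - (A m n q (s + 1) : ℤ)).natAbs := by
  have hcardp : (rightSteps m n p).card = m := card_rightSteps hp
  have hcardq : (rightSteps m n q).card = m := card_rightSteps hq
  have step1 : ∑ k ∈ Finset.range m, (((L m n p).getD k 0 : ℤ) - ((L m n q).getD k 0 : ℤ)).natAbs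
      = ∑ k ∈ Finset.range m, ∑ t ∈ Finset.range (m + n),
          ((if (L m n p).getD k 0 ≤ t then (1 : ℤ) else 0)
            - (if (L m n q).getD k 0 ≤ t then (1 : ℤ) else 0)).natAbs := by
    apply Finset.sum_congr rfl
    intro k hk
    rw [Finset.mem_range] at hk
    have hkp : k < (L m n p).length := by rw [L_length hp]; exact hk
    have hkq : k < (L m n q).length := by rw [L_length hq]; exact hk
    rw [indicator_sum]
    · rw [List.getD_eq_getElem _ _ hkp]
      have := L_lt_N hp k hkp
      simp only [List.get_eq_getElem] at this
      omega
    · rw [List.getD_eq_getElem _ _ hkq]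
      have := L_lt_N hq k hkq
      simp only [List.get_eq_getElem] at this
      omega
  have step2 : ∀ t ∈ Finset.range (m + n), ∀ k ∈ Finset.range m,
      ((if (L m n p).getD k 0 ≤ t then (1 : ℤ) else 0)
        - (if (L m n q).getD k 0 ≤ t then (1 : ℤ) else 0)).natAbs
      = ((if A m n p (t + 1) ≤ k then (1 : ℤ) else 0)
        - (if A m n q (t + 1) ≤ k then (1 : ℤ) else 0)).natAbs := by
    intro t _ k hk
    rw [Finset.mem_range] at hk
    have hkp : k < (L m n p).length := by rw [L_length hp]; exact hk
    have hkq : k < (L m n q).length := by rw [L_length hq]; exact hk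
    have hip : (L m n p).getD k 0 ≤ t ↔ ¬ (A m n p (t + 1) ≤ k) := by
      rw [List.getD_eq_getElem _ _ hkp]
      have := L_get_le_iff (p := p) k hkp t
      simp only [List.get_eq_getElem] at this
      omega
    have hiq : (L m n q).getD k 0 ≤ t ↔ ¬ (A m n q (t + 1) ≤ k) := by
      rw [List.getD_eq_getElem _ _ hkq]
      have := L_get_le_iff (p := q) k hkq t
      simp only [List.get_eq_getElem] at this
      omega
    have e1 : (if (L m n p).getD k 0 ≤ t then (1 : ℤ) else 0)
        = 1 - (if A m n p (t + 1) ≤ k then (1 : ℤ) else 0) := by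
      by_cases h : A m n p (t + 1) ≤ k
      · rw [if_pos h, if_neg (fun hh => (hip.mp hh) h)]; ring
      · rw [if_neg h, if_pos (hip.mpr h)]; ring
    have e2 : (if (L m n q).getD k 0 ≤ t then (1 : ℤ) else 0)
        = 1 - (if A m n q (t + 1) ≤ k then (1 : ℤ) else 0) := by
      by_cases h : A m n q (t + 1) ≤ k
      · rw [if_pos h, if_neg (fun hh => (hiq.mp hh) h)]; ring
      · rw [if_neg h, if_pos (hiq.mpr h)]; ring
    rw [e1, e2]
    have : (1 - (if A m n p (t + 1) ≤ k then (1 : ℤ) else 0))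
        - (1 - (if A m n q (t + 1) ≤ k then (1 : ℤ) else 0))
        = -((if A m n p (t + 1) ≤ k then (1 : ℤ) else 0)
            - (if A m n q (t + 1) ≤ k then (1 : ℤ) else 0)) := by ring
    rw [this, Int.natAbs_neg]
  have step3 : ∀ t ∈ Finset.range (m + n),
      ∑ k ∈ Finset.range m, ((if A m n p (t + 1) ≤ k then (1 : ℤ) else 0)
        - (if A m n q (t + 1) ≤ k then (1 : ℤ) else 0)).natAbs
      = ((A m n p (t + 1) : ℤ) - (A m n q (t + 1) : ℤ)).natAbs := by
    intro t _
    exact indicator_sum m _ _ (le_trans A_le_card (le_of_eq hcardp)) (le_trans A_le_card (le_of_eq hcardq))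
  rw [step1, Finset.sum_comm]
  apply Finset.sum_congr rfl
  intro t ht
  rw [Finset.sum_congr rfl (step2 t ht), step3 t ht]

lemma count_iff_sum (hp : IsStaircase m n p) (hq : IsStaircase m n q) :
    (Finset.filter (fun s => ¬ A m n p (s + 1) = A m n q (s + 1)) (Finset.range (m + n))).card = 1
      ↔ ∑ s ∈ Finset.range (m + n), ((A m n p (s + 1) : ℤ) - (A m n q (s + 1) : ℤ)).natAbs = 1 := by
  constructor
  · intro h
    obtain ⟨s0, hs0⟩ := Finset.card_eq_one.mp h
    have hs0mem : s0 ∈ Finset.filter (fun s => ¬ A m n p (s + 1) = A m n q (s + 1))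
        (Finset.range (m + n)) := by rw [hs0]; exact Finset.mem_singleton_self s0
    rw [Finset.mem_filter, Finset.mem_range] at hs0mem
    have heq : ∀ s < m + n, s ≠ s0 → A m n p (s + 1) = A m n q (s + 1) := by
      intro s hs hne
      by_contra hcon
      have : s ∈ Finset.filter (fun s => ¬ A m n p (s + 1) = A m n q (s + 1))
          (Finset.range (m + n)) := Finset.mem_filter.mpr ⟨Finset.mem_range.mpr hs, hcon⟩
      rw [hs0, Finset.mem_singleton] at this
      exact hne this
    have hprev : A m n p s0 = A m n q s0 := by
      rcases Nat.eq_zero_or_pos s0 with h0 | h0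
      · rw [h0, A_zero, A_zero]
      · obtain ⟨u, rfl⟩ := Nat.exists_eq_add_of_lt h0
        simp only [Nat.zero_add] at *
        exact heq u (by omega) (by omega)
    have hval : ((A m n p (s0 + 1) : ℤ) - (A m n q (s0 + 1) : ℤ)).natAbs = 1 := by
      have h1 := A_mono (p := p) s0
      have h2 := A_succ_le (p := p) s0
      have h3 := A_mono (p := q) s0
      have h4 := A_succ_le (p := q) s0
      have h5 := hs0mem.2
      omega
    rw [Finset.sum_eq_single_of_mem s0 (Finset.mem_range.mpr hs0mem.1)]
    · exact hval
    · intro s hs hne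
      rw [Finset.mem_range] at hs
      rw [heq s hs hne]
      omega
  · intro h
    have hle : (Finset.filter (fun s => ¬ A m n p (s + 1) = A m n q (s + 1))
        (Finset.range (m + n))).card ≤ 1 := by
      rw [Finset.card_filter]
      calc _ ≤ ∑ s ∈ Finset.range (m + n),
            ((A m n p (s + 1) : ℤ) - (A m n q (s + 1) : ℤ)).natAbs :=
          Finset.sum_le_sum (fun s _ => by split_ifs with hs <;> omega)
        _ = 1 := h
    have hge : 1 ≤ (Finset.filter (fun s => ¬ A m n p (s + 1) = A m n q (s + 1))
        (Finset.range (m + n))).card := by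
      obtain ⟨s, hs, hne⟩ := Finset.exists_ne_zero_of_sum_ne_zero (by rw [h]; omega :
        ∑ s ∈ Finset.range (m + n), ((A m n p (s + 1) : ℤ) - (A m n q (s + 1) : ℤ)).natAbs ≠ 0)
      apply Finset.card_pos.mpr
      exact ⟨s, Finset.mem_filter.mpr ⟨hs, by omega⟩⟩
    omega

end StairAux

open StairAux

set_option maxHeartbeats 1000000

/-- Two distinct staircases from `(0,0)` to `(m,n)` visit exactly `m+n` common lattice
points if and only if their associated vectors `s(F_P)`, `s(F_Q)` differ in exactly one
coordinate, and there by exactly one, i.e. `∑_k |s(F_P)_k − s(F_Q)_k| = 1`. -/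
theorem staircase_dual_adjacency (m n : ℕ) (p q : Fin (m + n + 1) → ℕ × ℕ)
    (hp : IsStaircase m n p) (hq : IsStaircase m n q) (hpq : p ≠ q) :
    ((Finset.univ.image p) ∩ (Finset.univ.image q)).card = m + n ↔
      ∑ k : Fin m, ((sVec m n p k : ℤ) - (sVec m n q k : ℤ)).natAbs = 1 := by
  classical
  rw [inter_card hp hq]
  -- Step 1: equal-point count = m+n iff unequal-point count = 1
  have hsplit := Finset.card_filter_add_card_filter_not
    (s := (Finset.univ : Finset (Fin (m + n + 1)))) (p := fun t => p t = q t)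
  rw [Finset.card_univ, Fintype.card_fin] at hsplit
  have step1 : (Finset.univ.filter (fun t => p t = q t)).card = m + n ↔
      (Finset.univ.filter (fun t : Fin (m + n + 1) => ¬ p t = q t)).card = 1 := by omega
  -- Step 2: translate to A over range
  have step2 : (Finset.univ.filter (fun t : Fin (m + n + 1) => ¬ p t = q t)).card
      = (Finset.filter (fun s => ¬ A m n p (s + 1) = A m n q (s + 1))
          (Finset.range (m + n))).card := by
    rw [Finset.card_filter, Finset.card_filter]
    have hzero : A m n p 0 = A m n q 0 := by rw [A_zero, A_zero]
    have e : ∀ t : Fin (m + n + 1), (if ¬ p t = q t then (1 : ℕ) else 0)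
        = (fun s : ℕ => if ¬ A m n p s = A m n q s then (1 : ℕ) else 0) t.val := fun t =>
      if_congr (not_congr (point_eq_iff hp hq t)) rfl rfl
    rw [Finset.sum_congr rfl (fun t _ => e t),
      Fin.sum_univ_eq_sum_range (fun s : ℕ => if ¬ A m n p s = A m n q s then (1 : ℕ) else 0)
        (m + n + 1),
      Finset.sum_range_succ']
    simp [hzero]
  -- Step 3: rewrite RHS sum via L
  have step3 : ∑ k : Fin m, ((sVec m n p k : ℤ) - (sVec m n q k : ℤ)).natAbs
      = ∑ k ∈ Finset.range m, (((L m n p).getD k 0 : ℤ) - ((L m n q).getD k 0 : ℤ)).natAbs := by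
    rw [← Fin.sum_univ_eq_sum_range
      (fun k => (((L m n p).getD k 0 : ℤ) - ((L m n q).getD k 0 : ℤ)).natAbs) m]
    apply Finset.sum_congr rfl
    intro k _
    have hkp : (k : ℕ) < (L m n p).length := by rw [L_length hp]; exact k.isLt
    have hkq : (k : ℕ) < (L m n q).length := by rw [L_length hq]; exact k.isLt
    have h1 : (k : ℕ) ≤ (L m n p).getD k 0 := by
      have := le_L_get (p := p) k hkp
      rw [List.getD_eq_getElem _ _ hkp]
      simpa using this
    have h2 : (k : ℕ) ≤ (L m n q).getD k 0 := by
      have := le_L_get (p := q) k hkq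
      rw [List.getD_eq_getElem _ _ hkq]
      simpa using this
    have e1 : sVec m n p k = (L m n p).getD k 0 - (k : ℕ) := rfl
    have e2 : sVec m n q k = (L m n q).getD k 0 - (k : ℕ) := rfl
    rw [e1, e2]
    omega
  rw [step1, step2, step3, sum_abs_eq hp hq, count_iff_sum hp hq]
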